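/- Let φ be the standard normal density and Φ the standard normal cdf. Fix λ ∈ (0,1]. Then the equation Φ(z)·(1 − z²) − z·φ(z) = 1/(2(1+λ)) has a unique solution z* in (−∞, 0), and the near-expiry expected relative reward G(z) = (1 − 2Φ(z)(1+λ))·(−φ(z)/z − Φ(z)) attains its maximal value over z ∈ (−∞, 0) at z = z*; equivalently, 𝓔_λ(δ) = (1 − 2δ(1+λ))·R̄_δ is maximized over δ ∈ (0, 1/2) at the unique δ* = Φ(z*) solving δ(1 − z_δ²) − z_δ·φ(z_δ) = 1/(2(1+λ)). -/

import Mathlib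

open MeasureTheory Real

/-- The standard normal density φ(u) = exp(-u²/2)/√(2π). -/
noncomputable def stdNormalPdf (u : ℝ) : ℝ := Real.exp (-u ^ 2 / 2) / Real.sqrt (2 * Real.pi)

/-- The standard normal cdf Φ(z) = ∫_{-∞}^z φ(u) du. -/
noncomputable def stdNormalCdf (z : ℝ) : ℝ := ∫ u in Set.Iic z, stdNormalPdf u

section Aux
open Set Filter

lemma sqrt_two_pi_pos : 0 < Real.sqrt (2 * Real.pi) :=
  Real.sqrt_pos.2 (by positivity)

lemma pdf_pos (u : ℝ) : 0 < stdNormalPdf u :=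
  div_pos (Real.exp_pos _) sqrt_two_pi_pos

lemma pdf_continuous : Continuous stdNormalPdf := by
  unfold stdNormalPdf
  fun_prop

lemma pdf_integrable : Integrable stdNormalPdf := by
  have h : Integrable (fun u : ℝ => Real.exp (-(1/2) * u ^ 2)) := integrable_exp_neg_mul_sq (by norm_num)
  have := h.div_const (Real.sqrt (2 * Real.pi))
  convert this using 2 with u
  unfold stdNormalPdf
  ring_nf

lemma integral_pdf : ∫ u, stdNormalPdf u = 1 := by
  have h : ∫ u : ℝ, Real.exp (-(1/2) * u ^ 2) = Real.sqrt (Real.pi / (1/2)) :=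
    integral_gaussian (1/2)
  have heq : ∀ u : ℝ, stdNormalPdf u = Real.exp (-(1/2) * u ^ 2) / Real.sqrt (2 * Real.pi) := by
    intro u; unfold stdNormalPdf; ring_nf
  simp_rw [heq]
  rw [integral_div, h]
  rw [div_eq_one_iff_eq (ne_of_gt sqrt_two_pi_pos)]
  norm_num
  ring_nf

lemma pdf_even (u : ℝ) : stdNormalPdf (-u) = stdNormalPdf u := by
  unfold stdNormalPdf; rw [neg_pow]; ring_nf

lemma cdf_zero : stdNormalCdf 0 = 1 / 2 := by
  have h1 : (∫ u in Set.Ioi (0:ℝ), stdNormalPdf u) = stdNormalCdf 0 := by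
    rw [show stdNormalCdf 0 = ∫ u in Set.Iic (-(0:ℝ)), stdNormalPdf u by norm_num; rfl,
      ← integral_comp_neg_Ioi]
    exact setIntegral_congr_fun measurableSet_Ioi fun x _ => (pdf_even x).symm
  have h2 : stdNormalCdf 0 + ∫ u in Set.Ioi (0:ℝ), stdNormalPdf u = 1 := by
    rw [show stdNormalCdf 0 = ∫ u in Set.Iic (0:ℝ), stdNormalPdf u from rfl]
    rw [intervalIntegral.integral_Iic_add_Ioi pdf_integrable.integrableOn pdf_integrable.integrableOn]
    exact integral_pdf
  rw [h1] at h2; linarith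

lemma cdf_hasDerivAt (z : ℝ) : HasDerivAt stdNormalCdf (stdNormalPdf z) z := by
  have key : stdNormalCdf = fun u => stdNormalCdf 0 + ∫ x in (0:ℝ)..u, stdNormalPdf x := by
    funext u
    rw [← intervalIntegral.integral_Iic_sub_Iic pdf_integrable.integrableOn
      pdf_integrable.integrableOn]
    simp [stdNormalCdf]
  rw [key]
  exact (intervalIntegral.integral_hasDerivAt_right
    (pdf_integrable.intervalIntegrable)
    (pdf_continuous.stronglyMeasurableAtFilter _ _)
    pdf_continuous.continuousAt).const_add _

lemma cdf_pos (z : ℝ) : 0 < stdNormalCdf z := by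
  have h1 : stdNormalCdf z - stdNormalCdf (z - 1) = ∫ x in (z-1)..z, stdNormalPdf x := by
    rw [← intervalIntegral.integral_Iic_sub_Iic pdf_integrable.integrableOn
      pdf_integrable.integrableOn]; rfl
  have h2 : 0 < ∫ x in (z-1)..z, stdNormalPdf x :=
    intervalIntegral.intervalIntegral_pos_of_pos
      (pdf_integrable.intervalIntegrable) (fun x => pdf_pos x) (by linarith)
  have h3 : 0 ≤ stdNormalCdf (z - 1) :=
    setIntegral_nonneg measurableSet_Iic (fun x _ => (pdf_pos x).le)
  linarith

lemma pdf_hasDerivAt (z : ℝ) : HasDerivAt stdNormalPdf (-z * stdNormalPdf z) z := by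
  have h : HasDerivAt (fun u : ℝ => -u ^ 2 / 2) (-z) z := by
    have := ((hasDerivAt_pow 2 z).neg).div_const 2
    exact this.congr_deriv (by norm_num; ring)
  have := (h.exp).div_const (Real.sqrt (2 * Real.pi))
  refine this.congr_deriv ?_
  unfold stdNormalPdf; ring

lemma cdf_continuous : Continuous stdNormalCdf :=
  continuous_iff_continuousAt.2 fun x => (cdf_hasDerivAt x).continuousAt

noncomputable def Fcn (z : ℝ) : ℝ := stdNormalCdf z * (1 - z ^ 2) - z * stdNormalPdf z

lemma F_hasDerivAt (z : ℝ) : HasDerivAt Fcn (-2 * z * stdNormalCdf z) z := by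
  have h := ((cdf_hasDerivAt z).mul ((hasDerivAt_const z (1:ℝ)).sub (hasDerivAt_pow 2 z))).sub
    ((hasDerivAt_id z).mul (pdf_hasDerivAt z))
  refine h.congr_deriv ?_
  simp; ring

lemma F_continuous : Continuous Fcn :=
  continuous_iff_continuousAt.2 fun x => (F_hasDerivAt x).continuousAt

lemma F_strictMonoOn : StrictMonoOn Fcn (Set.Iic 0) := by
  apply strictMonoOn_of_deriv_pos (convex_Iic 0) F_continuous.continuousOn
  intro x hx
  rw [interior_Iic] at hx
  rw [(F_hasDerivAt x).deriv]
  have := cdf_pos x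
  nlinarith [hx.out]

lemma F_neg_one_lt : Fcn (-1) < 1 / 4 := by
  have hF : Fcn (-1) = stdNormalPdf (-1) := by unfold Fcn; ring_nf
  rw [hF]
  have h1 : (2.5 : ℝ) < Real.sqrt (2 * Real.pi) := by
    rw [show (2.5:ℝ) = Real.sqrt 6.25 by
      rw [show (6.25:ℝ) = 2.5 ^ 2 by norm_num, Real.sqrt_sq (by norm_num)]]
    apply Real.sqrt_lt_sqrt (by norm_num)
    nlinarith [Real.pi_gt_d6]
  have h2 : Real.exp (-(1:ℝ)/2) < 0.625 := by
    have hsq : Real.exp (1/2) * Real.exp (1/2) = Real.exp 1 := by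
      rw [← Real.exp_add]; norm_num
    have he : (1.6 : ℝ) < Real.exp (1/2) := by
      nlinarith [Real.exp_one_gt_d9, Real.exp_pos ((1:ℝ)/2)]
    rw [show (-(1:ℝ)/2) = -(1/2) by norm_num, Real.exp_neg]
    rw [inv_lt_comm₀ (Real.exp_pos _) (by norm_num)]
    linarith
  have hp : stdNormalPdf (-1) = Real.exp (-(1:ℝ)/2) / Real.sqrt (2 * Real.pi) := by
    unfold stdNormalPdf; norm_num
  rw [hp, div_lt_iff₀ sqrt_two_pi_pos]
  nlinarith [Real.exp_pos (-(1:ℝ)/2)]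

lemma G_hasDerivAt (lam : ℝ) (hl : (0:ℝ) < 1 + lam) (x : ℝ) (hx : x ≠ 0) :
    HasDerivAt (fun z => (1 - 2 * stdNormalCdf z * (1 + lam)) *
        (-stdNormalPdf z / z - stdNormalCdf z))
      (2 * (1 + lam) * stdNormalPdf x / x ^ 2 * (1 / (2 * (1 + lam)) - Fcn x)) x := by
  have hA : HasDerivAt (fun z => 1 - 2 * stdNormalCdf z * (1 + lam))
      (0 - 2 * stdNormalPdf x * (1 + lam)) x :=
    (hasDerivAt_const x (1:ℝ)).sub (((cdf_hasDerivAt x).const_mul 2).mul_const (1 + lam))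
  have hR : HasDerivAt (fun z => -stdNormalPdf z / z - stdNormalCdf z)
      ((-(-x * stdNormalPdf x) * x - -stdNormalPdf x * 1) / x ^ 2 - stdNormalPdf x) x :=
    (((pdf_hasDerivAt x).neg.div (hasDerivAt_id x) hx)).sub (cdf_hasDerivAt x)
  have h := hA.mul hR
  refine h.congr_deriv ?_
  unfold Fcn
  field_simp
  ring

end Aux

/-- For λ ∈ (0,1], the equation Φ(z)(1 − z²) − z·φ(z) = 1/(2(1+λ)) has a unique
solution z* < 0, and the near-expiry expected relative reward
G(z) = (1 − 2Φ(z)(1+λ))·(−φ(z)/z − Φ(z)) attains its maximum over (−∞,0) at z*. -/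
theorem expected_reward_max_at_unique_root (lam : ℝ) (hlam : lam ∈ Set.Ioc (0 : ℝ) 1) :
    ∃ zs : ℝ, zs < 0 ∧
      stdNormalCdf zs * (1 - zs ^ 2) - zs * stdNormalPdf zs = 1 / (2 * (1 + lam)) ∧
      (∀ z : ℝ, z < 0 →
        stdNormalCdf z * (1 - z ^ 2) - z * stdNormalPdf z = 1 / (2 * (1 + lam)) →
        z = zs) ∧
      ∀ z : ℝ, z < 0 →
        (1 - 2 * stdNormalCdf z * (1 + lam)) * (-stdNormalPdf z / z - stdNormalCdf z) ≤
          (1 - 2 * stdNormalCdf zs * (1 + lam)) *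
            (-stdNormalPdf zs / zs - stdNormalCdf zs) := by
  obtain ⟨hl0, hl1⟩ := hlam
  have hlpos : (0:ℝ) < 1 + lam := by linarith
  set c : ℝ := 1 / (2 * (1 + lam)) with hc
  have hc_lt : c < 1 / 2 := by
    rw [hc, div_lt_div_iff₀ (by linarith) (by norm_num)]
    linarith
  have hc_ge : 1 / 4 ≤ c := by
    rw [hc, le_div_iff₀ (by linarith)]
    linarith
  have hF0 : Fcn 0 = 1 / 2 := by simp [Fcn, cdf_zero]
  -- find z0 ∈ (-1, 0) with c < Fcn z0
  have hev : ∀ᶠ x in nhds (0:ℝ), c < Fcn x := by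
    have h := F_continuous.continuousAt (x := (0:ℝ))
    rw [ContinuousAt, hF0] at h
    exact h.eventually (eventually_gt_nhds hc_lt)
  have h3 := ((hev.and (eventually_gt_nhds (show (-1:ℝ) < 0 by norm_num))).filter_mono
    (nhdsWithin_le_nhds (s := Set.Iio (0:ℝ)))).and eventually_mem_nhdsWithin
  obtain ⟨z0, ⟨hz0c, hz0gt⟩, hz0lt⟩ := h3.exists
  have hz0lt' : z0 < 0 := hz0lt
  -- IVT on [-1, z0]
  obtain ⟨zs, hzs_mem, hzs_eq⟩ :=
    intermediate_value_Icc (by linarith : (-1:ℝ) ≤ z0) F_continuous.continuousOn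
      ⟨le_of_lt (lt_of_lt_of_le F_neg_one_lt hc_ge), le_of_lt hz0c⟩
  have hzs_neg : zs < 0 := lt_of_le_of_lt hzs_mem.2 hz0lt'
  refine ⟨zs, hzs_neg, hzs_eq, ?_, ?_⟩
  · intro z hz hFz
    exact F_strictMonoOn.injOn (Set.mem_Iic.2 hz.le) (Set.mem_Iic.2 hzs_neg.le)
      (hFz.trans hzs_eq.symm)
  · intro z hz
    set G : ℝ → ℝ := fun z => (1 - 2 * stdNormalCdf z * (1 + lam)) *
      (-stdNormalPdf z / z - stdNormalCdf z) with hG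
    show G z ≤ G zs
    rcases lt_trichotomy z zs with hlt | heq | hgt
    · have hmono : StrictMonoOn G (Set.Icc z zs) := by
        apply strictMonoOn_of_deriv_pos (convex_Icc z zs)
        · exact fun x hx => (G_hasDerivAt lam hlpos x
            (ne_of_lt (lt_of_le_of_lt hx.2 hzs_neg))).continuousAt.continuousWithinAt
        · intro x hx
          rw [interior_Icc] at hx
          have hx0 : x < 0 := lt_trans hx.2 hzs_neg
          rw [(G_hasDerivAt lam hlpos x (ne_of_lt hx0)).deriv]
          apply mul_pos
          · have hxne : x ≠ 0 := ne_of_lt hx0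
            exact div_pos (by nlinarith [pdf_pos x]) (by positivity)
          · have hFx : Fcn x < Fcn zs :=
              F_strictMonoOn (Set.mem_Iic.2 hx0.le) (Set.mem_Iic.2 hzs_neg.le) hx.2
            rw [hzs_eq] at hFx
            linarith
      exact (hmono (Set.left_mem_Icc.2 hlt.le) (Set.right_mem_Icc.2 hlt.le) hlt).le
    · rw [heq]
    · have hanti : StrictAntiOn G (Set.Icc zs z) := by
        apply strictAntiOn_of_deriv_neg (convex_Icc zs z)
        · exact fun x hx => (G_hasDerivAt lam hlpos x
            (ne_of_lt (lt_of_le_of_lt hx.2 hz))).continuousAt.continuousWithinAt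
        · intro x hx
          rw [interior_Icc] at hx
          have hx0 : x < 0 := lt_trans hx.2 hz
          rw [(G_hasDerivAt lam hlpos x (ne_of_lt hx0)).deriv]
          apply mul_neg_of_pos_of_neg
          · have hxne : x ≠ 0 := ne_of_lt hx0
            exact div_pos (by nlinarith [pdf_pos x]) (by positivity)
          · have hFx : Fcn zs < Fcn x :=
              F_strictMonoOn (Set.mem_Iic.2 hzs_neg.le) (Set.mem_Iic.2 hx0.le) hx.1
            rw [hzs_eq] at hFx
            linarith
      exact (hanti (Set.left_mem_Icc.2 hgt.le) (Set.right_mem_Icc.2 hgt.le) hgt).le
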